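/- Let g be a permutation of a finite set, let σ be a matching commuting with g, and suppose σ maps the support of one cycle of g to the support of another (disjoint) cycle of g of the same length a. If σ(α_1) = β_j, where (α_1 α_2 ⋯ α_a) and (β_1 β_2 ⋯ β_a) are the two cycles, then σ contains all the transpositions (α_1 β_j), (α_2 β_{j+1}), …, (α_a β_{j-1}) (indices modulo a); in particular, the restriction of σ to the union of the supports of the two cycles is completely determined by the image of a single point. -/

import Mathlib

/-- A matching on a set is a fixed-point-free involution. -/
def IsMatching {X : Type*} (τ : Equiv.Perm X) : Prop :=
  τ * τ = 1 ∧ ∀ x, τ x ≠ x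

/-- The number of matchings commuting with a given permutation. -/
noncomputable def matchingCount {X : Type*} (g : Equiv.Perm X) : ℕ :=
  Nat.card {τ : Equiv.Perm X // IsMatching τ ∧ Commute g τ}

/-- Let `g` be a permutation of a finite set, `σ` a matching
commuting with `g`, and let `(α_1 ⋯ α_a)` and `(β_1 ⋯ β_a)` be two disjoint cycles of
`g` of the same length `a` (encoded, 0-indexed, by `α β : Fin a → X` with `Sum.elim α β`
injective).  If `σ (α 0) = β j`, then `σ` contains all the transpositions
`(α_i β_{j+i})` (indices mod `a`): the restriction of `σ` to the two cycles is
completely determined by the image of a single point. -/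
theorem stmt10 (a : ℕ) [NeZero a] (X : Type*) [Fintype X] [DecidableEq X]
    (g σ : Equiv.Perm X) (hσ : IsMatching σ) (hcomm : Commute g σ)
    (α β : Fin a → X) (hinj : Function.Injective (Sum.elim α β))
    (hgα : ∀ i, g (α i) = α (i + 1)) (hgβ : ∀ i, g (β i) = β (i + 1))
    (j : Fin a) (h1 : σ (α 0) = β j) :
    ∀ i : Fin a, σ (α i) = β (j + i) := by
  open Fin.NatCast in
  have key : ∀ n : ℕ, σ (α (n : Fin a)) = β (j + (n : Fin a)) := by
    intro n
    induction n with
    | zero => simpa using h1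
    | succ n ih =>
        have hc : σ (g (α (n : Fin a))) = g (σ (α (n : Fin a))) := by
          have := hcomm.symm
          rw [Commute, SemiconjBy] at this
          calc σ (g (α (n : Fin a))) = (σ * g) (α (n : Fin a)) := rfl
            _ = (g * σ) (α (n : Fin a)) := by rw [this]
            _ = g (σ (α (n : Fin a))) := rfl
        rw [hgα] at hc
        rw [ih, hgβ] at hc
        have : ((n + 1 : ℕ) : Fin a) = (n : Fin a) + 1 := by push_cast; ring
        rw [this, hc]
        congr 1
        simp only [add_assoc]
  intro i
  have := key i.val
  simpa using this
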